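/- Curve stabbing depth of points is invariant under orientation-preserving similarity transformations: let f : ℝ² → ℝ² be given by f(x) = b + c•(R_α x), where b ∈ ℝ², c > 0, and R_α is the rotation of the plane by a fixed angle α. Let C be a nonempty finite family of n subsets of ℝ² (n ≥ 1) and q ∈ ℝ² a point, and assume θ ↦ min(stab_C(q,θ), stab_C(q,θ+π)) is integrable on [0,π]. Then D(f(q), f(C)) = D(q, C), where f(C) = {f(A) : A ∈ C}. -/

import Mathlib

open Real MeasureTheory
open scoped Classical

noncomputable section

abbrev Plane := EuclideanSpace ℝ (Fin 2)

/-- The ray rooted at `q` with angle `θ`. -/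
def ray (q : Plane) (θ : ℝ) : Set Plane :=
  {p | ∃ t : ℝ, 0 ≤ t ∧ p = q + t • (WithLp.equiv 2 (Fin 2 → ℝ)).symm ![Real.cos θ, Real.sin θ]}

/-- The stabbing number: the number of members of `C` intersected by `ray q θ`. -/
def stab (C : Finset (Set Plane)) (q : Plane) (θ : ℝ) : ℕ :=
  (C.filter fun A => (ray q θ ∩ A).Nonempty).card

/-- The normalized point depth of `q` relative to `C`. -/
def pointDepth (C : Finset (Set Plane)) (q : Plane) : ℝ :=
  (1 / (C.card * π)) * ∫ θ in (0:ℝ)..π, (min (stab C q θ) (stab C q (θ + π)) : ℝ)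

/-- Rotation of the plane by angle `α`. -/
def rot (α : ℝ) (p : Plane) : Plane :=
  (WithLp.equiv 2 (Fin 2 → ℝ)).symm
    ![Real.cos α * p 0 - Real.sin α * p 1, Real.sin α * p 0 + Real.cos α * p 1]

-- aux lemmas
lemma rot_apply (α : ℝ) (p : Plane) :
    rot α p 0 = Real.cos α * p 0 - Real.sin α * p 1 ∧
    rot α p 1 = Real.sin α * p 0 + Real.cos α * p 1 := by
  constructor <;> simp [rot]

lemma rot_rot_neg (α : ℝ) (p : Plane) : rot (-α) (rot α p) = p := by
  have h := sin_sq_add_cos_sq α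
  ext i
  fin_cases i <;> simp [rot]
  · linear_combination p 0 * h
  · linear_combination p 1 * h

lemma rot_inj (α : ℝ) : Function.Injective (rot α) := by
  intro x y h
  have := congrArg (rot (-α)) h
  rwa [rot_rot_neg, rot_rot_neg] at this

lemma smul_apply' (t : ℝ) (p : Plane) (i : Fin 2) : (t • p) i = t * p i := rfl
lemma add_apply' (p q : Plane) (i : Fin 2) : (p + q) i = p i + q i := rfl

lemma f_affine (b : Plane) (c : ℝ) (α : ℝ) (f : Plane → Plane)
    (hf : ∀ x, f x = b + c • rot α x) (q : Plane) (t θ : ℝ) :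
    f (q + t • (WithLp.equiv 2 (Fin 2 → ℝ)).symm ![Real.cos θ, Real.sin θ]) =
      f q + (c * t) • (WithLp.equiv 2 (Fin 2 → ℝ)).symm ![Real.cos (θ + α), Real.sin (θ + α)] := by
  ext i
  fin_cases i <;>
    simp [hf, rot, add_apply', smul_apply', Real.cos_add, Real.sin_add] <;> ring

lemma f_inj (b : Plane) (c : ℝ) (hc : 0 < c) (α : ℝ) (f : Plane → Plane)
    (hf : ∀ x, f x = b + c • rot α x) : Function.Injective f := by
  intro x y h
  rw [hf, hf] at h
  have h2 : c • rot α x = c • rot α y := by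
    have := add_left_cancel h; exact this
  have h3 : rot α x = rot α y := smul_right_injective Plane hc.ne' h2
  exact rot_inj α h3

lemma ray_image (b : Plane) (c : ℝ) (hc : 0 < c) (α : ℝ) (f : Plane → Plane)
    (hf : ∀ x, f x = b + c • rot α x) (q : Plane) (θ : ℝ) :
    f '' ray q θ = ray (f q) (θ + α) := by
  ext p
  constructor
  · rintro ⟨x, ⟨t, ht, rfl⟩, rfl⟩
    exact ⟨c * t, by positivity, by rw [f_affine b c α f hf q t θ]⟩
  · rintro ⟨s, hs, rfl⟩
    refine ⟨q + (s / c) • (WithLp.equiv 2 (Fin 2 → ℝ)).symm ![Real.cos θ, Real.sin θ],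
      ⟨s / c, by positivity, rfl⟩, ?_⟩
    rw [f_affine b c α f hf q (s / c) θ, mul_div_cancel₀ s hc.ne']

lemma stab_image (b : Plane) (c : ℝ) (hc : 0 < c) (α : ℝ) (f : Plane → Plane)
    (hf : ∀ x, f x = b + c • rot α x) (C : Finset (Set Plane)) (q : Plane) (θ : ℝ) :
    stab (C.image fun A => f '' A) (f q) θ = stab C q (θ - α) := by
  have hinj := f_inj b c hc α f hf
  have himg : Function.Injective (fun A : Set Plane => f '' A) :=
    Set.image_injective.2 hinj
  unfold stab
  rw [Finset.filter_image, Finset.card_image_of_injective _ himg]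
  congr 1
  apply Finset.filter_congr
  intro A _
  have : ray (f q) θ = f '' ray q (θ - α) := by
    rw [ray_image b c hc α f hf q (θ - α), sub_add_cancel]
  simp only [this, ← Set.image_inter hinj]
  exact Set.image_nonempty (f := f)

lemma g_periodic (C : Finset (Set Plane)) (q : Plane) :
    Function.Periodic (fun θ : ℝ => (min (stab C q θ) (stab C q (θ + π)) : ℝ)) π := by
  intro θ
  have hray : ∀ φ : ℝ, ray q (φ + 2 * π) = ray q φ := by
    intro φ
    simp [ray, Real.cos_add_two_pi, Real.sin_add_two_pi]
  have hstab : stab C q (θ + π + π) = stab C q θ := by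
    unfold stab
    rw [show θ + π + π = θ + 2 * π by ring, hray]
  simp only [hstab]
  rw [min_comm]

theorem stmt5 (b : Plane) (c : ℝ) (hc : 0 < c) (α : ℝ) (f : Plane → Plane)
    (hf : ∀ x, f x = b + c • rot α x)
    (n : ℕ) (hn : 1 ≤ n) (C : Finset (Set Plane)) (hC : C.card = n) (q : Plane)
    (hint : IntervalIntegrable
      (fun θ : ℝ => (min (stab C q θ) (stab C q (θ + π)) : ℝ)) volume 0 π) :
    pointDepth (C.image fun A => f '' A) (f q) = pointDepth C q := by
  have himg : Function.Injective (fun A : Set Plane => f '' A) :=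
    Set.image_injective.2 (f_inj b c hc α f hf)
  have hcard : (C.image fun A => f '' A).card = C.card :=
    Finset.card_image_of_injective _ himg
  unfold pointDepth
  rw [hcard]
  congr 1
  have hfun : ∀ θ : ℝ,
      (min (stab (C.image fun A => f '' A) (f q) θ)
        (stab (C.image fun A => f '' A) (f q) (θ + π)) : ℝ) =
      (min (stab C q (θ - α)) (stab C q (θ - α + π)) : ℝ) := by
    intro θ
    rw [stab_image b c hc α f hf, stab_image b c hc α f hf,
      show θ + π - α = θ - α + π by ring]
  calc ∫ θ in (0:ℝ)..π,
        (min (stab (C.image fun A => f '' A) (f q) θ)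
          (stab (C.image fun A => f '' A) (f q) (θ + π)) : ℝ)
      = ∫ θ in (0:ℝ)..π, (min (stab C q (θ - α)) (stab C q (θ - α + π)) : ℝ) := by
        simp only [hfun]
    _ = ∫ θ in (0:ℝ) - α..π - α, (min (stab C q θ) (stab C q (θ + π)) : ℝ) :=
        intervalIntegral.integral_comp_sub_right (fun θ => (min (stab C q θ) (stab C q (θ + π)) : ℝ)) α
    _ = ∫ θ in (0:ℝ)..π, (min (stab C q θ) (stab C q (θ + π)) : ℝ) := by
        have := (g_periodic C q).intervalIntegral_add_eq (-α) 0
        simpa [sub_eq_add_neg, add_comm, zero_add] using this
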